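/- arXiv:1910.07555 — 6 statements merged into one kernel-verified Lean document; each statement's English description precedes it below -/
import Mathlib

section
/- Let Σ1, Σ2 be symmetric positive semidefinite d×d matrices. Then trace((Σ1^{1/2} Σ2 Σ1^{1/2})^{1/2}) ≥ trace(Σ1^{1/2} Σ2^{1/2}). (Araki–Lieb–Thirring inequality with r = 1/2, q = 1.) -/
open MeasureTheory Matrix

open scoped ComplexOrder in
/-- The positive semidefinite square root of a positive semidefinite matrix
(the definition `Matrix.PosSemidef.sqrt` of the older Mathlib, removed since). -/
noncomputable def Matrix.PosSemidef.sqrt {n 𝕜 : Type*} [Fintype n] [RCLike 𝕜] [DecidableEq n]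
    {A : Matrix n n 𝕜} (hA : A.PosSemidef) : Matrix n n 𝕜 :=
  hA.1.eigenvectorUnitary.1 * diagonal ((↑) ∘ (fun x : ℝ => Real.sqrt x) ∘ hA.1.eigenvalues) *
    (star hA.1.eigenvectorUnitary : Matrix n n 𝕜)

lemma Matrix.PosSemidef.posSemidef_sqrt {d : ℕ} {A : Matrix (Fin d) (Fin d) ℝ}
    (hA : A.PosSemidef) : hA.sqrt.PosSemidef := by
  unfold Matrix.PosSemidef.sqrt
  apply PosSemidef.mul_mul_conjTranspose_same
  refine posSemidef_diagonal_iff.mpr fun i => ?_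
  simp [Real.sqrt_nonneg]

lemma Matrix.PosSemidef.sqrt_mul_self {d : ℕ} {A : Matrix (Fin d) (Fin d) ℝ}
    (hA : A.PosSemidef) : hA.sqrt * hA.sqrt = A := by
  let C : Matrix (Fin d) (Fin d) ℝ := hA.1.eigenvectorUnitary
  let E := diagonal ((↑) ∘ (fun x : ℝ => Real.sqrt x) ∘ hA.1.eigenvalues : Fin d → ℝ)
  suffices C * (E * (star C * C) * E) * star C = A by
    rw [Matrix.PosSemidef.sqrt]
    change (C * E * star C) * (C * E * star C) = A
    simpa only [← mul_assoc] using this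
  have : star C * C = 1 := by simp only [C, Unitary.coe_star_mul_self]
  rw [this, mul_one]
  have : E * E = diagonal ((↑) ∘ hA.1.eigenvalues) := by
    rw [diagonal_mul_diagonal]
    congr! with v
    simp [Real.mul_self_sqrt (hA.eigenvalues_nonneg v)]
  rw [this]
  conv_rhs => rw [hA.1.spectral_theorem, Unitary.conjStarAlgAut_apply]
  rfl

lemma trace_le_of_sq_eq {d : ℕ} (M C : Matrix (Fin d) (Fin d) ℝ)
    (hC : C.PosSemidef) (h : C * C = M * Mᴴ) : M.trace ≤ C.trace := by
  classical
  set V : Matrix (Fin d) (Fin d) ℝ := (hC.1.eigenvectorUnitary : Matrix (Fin d) (Fin d) ℝ)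
  have hVV : V * Vᴴ = 1 := by
    have := (Matrix.mem_unitaryGroup_iff).mp (IsHermitian.eigenvectorUnitary hC.1).2
    rwa [Matrix.star_eq_conjTranspose] at this
  have hVV' : Vᴴ * V = 1 := by
    have := (Matrix.mem_unitaryGroup_iff').mp (IsHermitian.eigenvectorUnitary hC.1).2
    rwa [Matrix.star_eq_conjTranspose] at this
  set D : Matrix (Fin d) (Fin d) ℝ := diagonal (RCLike.ofReal ∘ hC.1.eigenvalues)
  have hD : Vᴴ * C * V = D := by
    have := hC.1.conjStarAlgAut_star_eigenvectorUnitary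
    simp only [Unitary.conjStarAlgAut_apply, Unitary.coe_star, star_star] at this
    rwa [Matrix.star_eq_conjTranspose] at this
  set N : Matrix (Fin d) (Fin d) ℝ := Vᴴ * M * V with hNdef
  have htrN : N.trace = M.trace := by
    rw [Matrix.trace_mul_cycle, hVV, one_mul]
  have htrC : D.trace = C.trace := by
    rw [← hD, Matrix.trace_mul_cycle, hVV, one_mul]
  have hNN : N * Nᴴ = D * D := by
    have e1 : N * Nᴴ = Vᴴ * (M * Mᴴ) * V := by
      simp only [hNdef, Matrix.conjTranspose_mul, Matrix.conjTranspose_conjTranspose]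
      calc Vᴴ * M * V * (Vᴴ * (Mᴴ * V))
          = Vᴴ * (M * ((V * Vᴴ) * (Mᴴ * V))) := by simp only [Matrix.mul_assoc]
        _ = Vᴴ * (M * Mᴴ) * V := by rw [hVV]; simp only [Matrix.one_mul, Matrix.mul_assoc]
    rw [e1, ← h, ← hD]
    calc Vᴴ * (C * C) * V
        = (Vᴴ * C) * ((V * Vᴴ) * (C * V)) := by rw [hVV, Matrix.one_mul]; simp only [Matrix.mul_assoc]
      _ = (Vᴴ * C * V) * (Vᴴ * C * V) := by simp only [Matrix.mul_assoc]
  have key : ∀ i, N i i ≤ D i i := by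
    intro i
    have hdiag : (N * Nᴴ) i i = ∑ j, (N i j) ^ 2 := by
      simp [Matrix.mul_apply, Matrix.conjTranspose_apply, sq]
    have hDii : (D * D) i i = (hC.1.eigenvalues i) ^ 2 := by
      simp [D, Matrix.diagonal_mul_diagonal, Matrix.diagonal_apply_eq, sq]
    have hsum : ∑ j, (N i j) ^ 2 = (hC.1.eigenvalues i) ^ 2 := by
      rw [← hdiag, hNN, hDii]
    have h1 : (N i i) ^ 2 ≤ ∑ j, (N i j) ^ 2 :=
      Finset.single_le_sum (f := fun j => (N i j) ^ 2)
        (fun j _ => sq_nonneg _) (Finset.mem_univ i)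
    have hev : 0 ≤ hC.1.eigenvalues i := hC.eigenvalues_nonneg i
    have hle : N i i ≤ hC.1.eigenvalues i := by nlinarith
    simpa [D, Matrix.diagonal_apply_eq] using hle
  have hND : N.trace ≤ D.trace := by
    simp only [Matrix.trace, Matrix.diag]
    exact Finset.sum_le_sum fun i _ => key i
  rw [← htrN, ← htrC]; exact hND

theorem stmt4 {d : ℕ} (S1 S2 : Matrix (Fin d) (Fin d) ℝ)
    (h1 : S1.PosSemidef) (h2 : S2.PosSemidef)
    (h12 : (h1.sqrt * S2 * h1.sqrt).PosSemidef) :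
    (h1.sqrt * h2.sqrt).trace ≤ h12.sqrt.trace := by
  apply trace_le_of_sq_eq _ _ h12.posSemidef_sqrt
  rw [h12.sqrt_mul_self]
  have hA : (h1.sqrt)ᴴ = h1.sqrt := h1.posSemidef_sqrt.1
  have hB : (h2.sqrt)ᴴ = h2.sqrt := h2.posSemidef_sqrt.1
  rw [Matrix.conjTranspose_mul, hA, hB]
  calc h1.sqrt * S2 * h1.sqrt
      = h1.sqrt * (h2.sqrt * h2.sqrt) * h1.sqrt := by rw [h2.sqrt_mul_self]
    _ = h1.sqrt * h2.sqrt * (h2.sqrt * h1.sqrt) := by simp only [Matrix.mul_assoc]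
end

section
/- Let B be a symmetric positive definite d×d matrix, σ > 0, and C0 symmetric positive definite. Then C(t) = ((1 − e^{−2σt})/σ · B^{−1} + e^{−2σt} · C0^{−1})^{−1} solves the matrix ODE C'(t) = −2 C(t) B^{−1} C(t) + 2σ C(t) with C(0) = C0, and C(t) is symmetric positive definite for all t ≥ 0. -/
open MeasureTheory Matrix

attribute [local instance] Matrix.linftyOpNormedRing Matrix.linftyOpNormedAlgebra

lemma aux_smul_posSemidef {n : Type*} [Fintype n] {A : Matrix n n ℝ} (hA : A.PosSemidef)
    {c : ℝ} (hc : 0 ≤ c) : (c • A).PosSemidef := by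
  refine ⟨?_, fun x => ?_⟩
  · have h1 := hA.1
    unfold Matrix.IsHermitian at *
    rw [conjTranspose_smul, h1]
    simp
  · have key : (x.sum fun i xi => x.sum fun j xj => star xi * (c • A) i j * xj)
        = c * (x.sum fun i xi => x.sum fun j xj => star xi * A i j * xj) := by
      simp only [Finsupp.sum, Finset.mul_sum, Matrix.smul_apply, smul_eq_mul]
      exact Finset.sum_congr rfl fun _ _ => Finset.sum_congr rfl fun _ _ => by ring
    rw [key]
    exact mul_nonneg hc (hA.2 x)

lemma aux_smul_posDef {n : Type*} [Fintype n] {A : Matrix n n ℝ} (hA : A.PosDef)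
    {c : ℝ} (hc : 0 < c) : (c • A).PosDef := by
  refine ⟨?_, fun x hx => ?_⟩
  · have h1 := hA.1
    unfold Matrix.IsHermitian at *
    rw [conjTranspose_smul, h1]
    simp
  · have key : (x.sum fun i xi => x.sum fun j xj => star xi * (c • A) i j * xj)
        = c * (x.sum fun i xi => x.sum fun j xj => star xi * A i j * xj) := by
      simp only [Finsupp.sum, Finset.mul_sum, Matrix.smul_apply, smul_eq_mul]
      exact Finset.sum_congr rfl fun _ _ => Finset.sum_congr rfl fun _ _ => by ring
    rw [key]
    exact mul_pos hc (hA.2 hx)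

noncomputable def entryCLM {d : ℕ} (i j : Fin d) : Matrix (Fin d) (Fin d) ℝ →L[ℝ] ℝ :=
  LinearMap.toContinuousLinearMap
    { toFun := fun A => A i j, map_add' := fun _ _ => rfl, map_smul' := fun _ _ => rfl }

@[simp] lemma entryCLM_apply {d : ℕ} (i j : Fin d) (A : Matrix (Fin d) (Fin d) ℝ) :
    entryCLM i j A = A i j := rfl

theorem stmt12 {d : ℕ} (B C0 : Matrix (Fin d) (Fin d) ℝ)
    (hB : B.PosDef) (hC0 : C0.PosDef) (σ : ℝ) (hσ : 0 < σ)
    (C : ℝ → Matrix (Fin d) (Fin d) ℝ)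
    (hC : C = fun t => (((1 - Real.exp (-2 * σ * t)) / σ) • B⁻¹ +
      Real.exp (-2 * σ * t) • C0⁻¹)⁻¹) :
    C 0 = C0 ∧ (∀ t, 0 ≤ t → (C t).PosDef) ∧
    ∀ t, 0 ≤ t → ∀ i j, HasDerivAt (fun s => C s i j)
      (((-2 : ℝ) • (C t * B⁻¹ * C t) + (2 * σ) • C t) i j) t := by
  set M : ℝ → Matrix (Fin d) (Fin d) ℝ := fun t =>
    ((1 - Real.exp (-2 * σ * t)) / σ) • B⁻¹ + Real.exp (-2 * σ * t) • C0⁻¹ with hMdef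
  have hCM : C = fun t => (M t)⁻¹ := hC
  have hMpos : ∀ t, 0 ≤ t → (M t).PosDef := by
    intro t ht
    have he : Real.exp (-2 * σ * t) ≤ 1 := by
      apply Real.exp_le_one_iff.mpr
      nlinarith
    have ha : 0 ≤ (1 - Real.exp (-2 * σ * t)) / σ :=
      div_nonneg (by linarith) hσ.le
    exact Matrix.PosDef.posSemidef_add
      (aux_smul_posSemidef hB.inv.posSemidef ha)
      (aux_smul_posDef hC0.inv (Real.exp_pos _))
  have hCpos : ∀ t, 0 ≤ t → (C t).PosDef := by
    intro t ht
    rw [hCM]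
    exact (hMpos t ht).inv
  have hMunit : ∀ t, 0 ≤ t → IsUnit (M t) := by
    intro t ht
    exact (Matrix.isUnit_iff_isUnit_det _).2 (hMpos t ht).det_pos.ne'.isUnit
  refine ⟨?_, hCpos, ?_⟩
  · rw [hCM]
    have h0 : M 0 = C0⁻¹ := by
      simp [hMdef]
    simp only [h0]
    exact Matrix.nonsing_inv_nonsing_inv _ hC0.det_pos.ne'.isUnit
  · intro t ht i j
    set e : ℝ := Real.exp (-2 * σ * t) with hedef
    have he : HasDerivAt (fun s : ℝ => Real.exp (-2 * σ * s)) (-2 * σ * e) t := by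
      have h1 : HasDerivAt (fun s : ℝ => -2 * σ * s) (-2 * σ) t := by
        simpa using (hasDerivAt_id t).const_mul (-2 * σ)
      simpa [hedef, mul_comm] using h1.exp
    have ha : HasDerivAt (fun s : ℝ => (1 - Real.exp (-2 * σ * s)) / σ)
        ((-(-2 * σ * e)) / σ) t := (he.const_sub 1).div_const σ
    have hM' : HasDerivAt M ((((-(-2 * σ * e)) / σ) • B⁻¹ + (-2 * σ * e) • C0⁻¹)) t :=
      (ha.smul_const B⁻¹).add (he.smul_const C0⁻¹)
    have hkey : ((((-(-2 * σ * e)) / σ) • B⁻¹ + (-2 * σ * e) • C0⁻¹))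
        = (2 : ℝ) • B⁻¹ - (2 * σ) • M t := by
      rw [hMdef]
      ext k l
      simp only [Matrix.sub_apply, Matrix.add_apply, Matrix.smul_apply, smul_eq_mul]
      rw [hedef]
      field_simp
      ring
    rw [hkey] at hM'
    have hu := hMunit t ht
    have hMM' : HasDerivAt M ((2 : ℝ) • B⁻¹ - (2 * σ) • M t) t := hM'
    have hfd0 : HasFDerivAt Ring.inverse
        (-(ContinuousLinearMap.mulLeftRight ℝ (Matrix (Fin d) (Fin d) ℝ) ↑hu.unit⁻¹) ↑hu.unit⁻¹)
        (M t) := by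
      have h := hasFDerivAt_ringInverse (𝕜 := ℝ) hu.unit
      rwa [hu.unit_spec] at h
    have hfd := hfd0.comp_hasDerivAt t hMM'
    have hinv : HasDerivAt (fun s => (M s)⁻¹)
        (-((M t)⁻¹ * ((2 : ℝ) • B⁻¹ - (2 * σ) • M t) * (M t)⁻¹)) t := by
      have heq : (fun s => Ring.inverse (M s)) = fun s => (M s)⁻¹ := by
        funext s
        rw [Matrix.nonsing_inv_eq_ringInverse]
      have hcoe : ((hu.unit⁻¹ : (Matrix (Fin d) (Fin d) ℝ)ˣ) : Matrix (Fin d) (Fin d) ℝ)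
          = (M t)⁻¹ := by
        rw [Matrix.coe_units_inv, hu.unit_spec]
      simp [Function.comp_def, heq, hcoe, ContinuousLinearMap.mulLeftRight_apply] at hfd
      exact hfd
    have hudet : IsUnit (M t).det := (Matrix.isUnit_iff_isUnit_det _).1 hu
    have h1 : (M t)⁻¹ * M t = 1 := Matrix.nonsing_inv_mul _ hudet
    have hval : (-((M t)⁻¹ * ((2 : ℝ) • B⁻¹ - (2 * σ) • M t) * (M t)⁻¹))
        = ((-2 : ℝ) • ((M t)⁻¹ * B⁻¹ * (M t)⁻¹) + (2 * σ) • (M t)⁻¹) := by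
      have h2 : (M t)⁻¹ * ((2 * σ) • M t) * (M t)⁻¹ = (2 * σ) • (M t)⁻¹ := by
        rw [Matrix.mul_smul, Matrix.smul_mul, h1, Matrix.one_mul]
      have h3 : (M t)⁻¹ * ((2 : ℝ) • B⁻¹) * (M t)⁻¹
          = (2 : ℝ) • ((M t)⁻¹ * B⁻¹ * (M t)⁻¹) := by
        rw [Matrix.mul_smul, Matrix.smul_mul]
      rw [Matrix.mul_sub, Matrix.sub_mul, h2, h3, neg_sub, neg_smul, sub_eq_add_neg, add_comm]
    have hfinal := (entryCLM i j).hasFDerivAt.comp_hasDerivAt t hinv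
    rw [hCM]
    show HasDerivAt (fun s => (M s)⁻¹ i j)
      (((-2 : ℝ) • ((M t)⁻¹ * B⁻¹ * (M t)⁻¹) + (2 * σ) • (M t)⁻¹) i j) t
    rw [← hval]
    simp [Function.comp_def] at hfinal
    exact hfinal
end

section
/- Let B, C0 be symmetric positive definite d×d matrices and σ = 0. Then C(t) = (2B^{−1}t + C0^{−1})^{−1} solves C'(t) = −2 C(t) B^{−1} C(t) with C(0) = C0, and moreover ‖C(t)‖₂ ≤ max(‖C0‖₂, ‖B‖₂)/(2t+1) for all t ≥ 0. -/
open MeasureTheory Matrix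

noncomputable def opNorm {d : ℕ} (M : Matrix (Fin d) (Fin d) ℝ) : ℝ :=
  ‖Matrix.toEuclideanCLM (𝕜 := ℝ) M‖

open scoped InnerProductSpace
open Matrix
open scoped InnerProductSpace

section auxE
variable {E : Type*} [NormedAddCommGroup E] [InnerProductSpace ℝ E]

lemma aux_gcs (T : E →L[ℝ] E) (hpos : ∀ z, 0 ≤ ⟪T z, z⟫_ℝ)
    (hsym : ∀ z w, ⟪T z, w⟫_ℝ = ⟪z, T w⟫_ℝ) (x y : E) :
    ⟪T x, y⟫_ℝ ^ 2 ≤ ⟪T x, x⟫_ℝ * ⟪T y, y⟫_ℝ := by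
  have key : discrim ⟪T y, y⟫_ℝ (2 * ⟪T x, y⟫_ℝ) ⟪T x, x⟫_ℝ ≤ 0 := by
    apply discrim_le_zero
    intro s
    have h := hpos (x + s • y)
    have hTyx : ⟪T y, x⟫_ℝ = ⟪T x, y⟫_ℝ := by rw [real_inner_comm, hsym]
    have e : ⟪T (x + s • y), x + s • y⟫_ℝ
        = ⟪T y, y⟫_ℝ * s ^ 2 + 2 * ⟪T x, y⟫_ℝ * s + ⟪T x, x⟫_ℝ := by
      rw [map_add, ContinuousLinearMap.map_smul]
      simp only [inner_add_left, inner_add_right, real_inner_smul_left, real_inner_smul_right,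
        hTyx]
      ring
    linarith [e ▸ h]
  rw [discrim] at key
  nlinarith [key]

lemma aux_norm_le (T : E →L[ℝ] E) (hpos : ∀ z, 0 ≤ ⟪T z, z⟫_ℝ)
    (hsym : ∀ z w, ⟪T z, w⟫_ℝ = ⟪z, T w⟫_ℝ) {β : ℝ} (hβ : 0 ≤ β)
    (h : ∀ x, ⟪T x, x⟫_ℝ ≤ β * ‖x‖ ^ 2) : ‖T‖ ≤ β := by
  refine T.opNorm_le_bound hβ fun x => ?_
  rcases eq_or_lt_of_le (norm_nonneg (T x)) with h0 | h0
  · rw [← h0]; positivity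
  have h1 : ⟪T x, T x⟫_ℝ ^ 2 ≤ ⟪T x, x⟫_ℝ * ⟪T (T x), T x⟫_ℝ := aux_gcs T hpos hsym x (T x)
  have h2 : ⟪T x, T x⟫_ℝ = ‖T x‖ ^ 2 := real_inner_self_eq_norm_sq (T x)
  have h3 := h x
  have h4 := h (T x)
  have h5 : 0 ≤ ⟪T x, x⟫_ℝ := hpos x
  have h6 : 0 ≤ ⟪T (T x), T x⟫_ℝ := hpos (T x)
  have h7 : ‖T x‖ ^ 2 ≤ β ^ 2 * ‖x‖ ^ 2 := by
    have h8 := mul_le_mul h3 h4 h6 (by positivity)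
    rw [h2] at h1
    nlinarith [mul_pos h0 h0]
  nlinarith [h7, sq_nonneg (‖T x‖ - β * ‖x‖), sq_nonneg (‖T x‖ + β * ‖x‖), norm_nonneg x,
    mul_nonneg hβ (norm_nonneg x)]

lemma aux_lower_inv (T S : E →L[ℝ] E) (hTS : ∀ z, T (S z) = z)
    (hpos : ∀ z, 0 ≤ ⟪T z, z⟫_ℝ) (hsym : ∀ z w, ⟪T z, w⟫_ℝ = ⟪z, T w⟫_ℝ) (x : E) :
    ‖x‖ ^ 2 / ‖T‖ ≤ ⟪S x, x⟫_ℝ := by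
  by_cases hx : x = 0
  · simp [hx]
  have hT : 0 < ‖T‖ := by
    rcases eq_or_lt_of_le (norm_nonneg T) with h0 | h0
    · exfalso
      apply hx
      rw [← hTS x, (norm_eq_zero.mp h0.symm : T = 0)]
      simp
    · exact h0
  have h1 : ⟪T (S x), x⟫_ℝ ^ 2 ≤ ⟪T (S x), S x⟫_ℝ * ⟪T x, x⟫_ℝ := aux_gcs T hpos hsym (S x) x
  rw [hTS] at h1
  have h2 : ⟪x, x⟫_ℝ = ‖x‖ ^ 2 := real_inner_self_eq_norm_sq x
  have h3 : ⟪T x, x⟫_ℝ ≤ ‖T‖ * ‖x‖ ^ 2 := by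
    calc ⟪T x, x⟫_ℝ ≤ ‖T x‖ * ‖x‖ := real_inner_le_norm _ _
    _ ≤ (‖T‖ * ‖x‖) * ‖x‖ := by gcongr; exact T.le_opNorm x
    _ = ‖T‖ * ‖x‖ ^ 2 := by ring
  have h4 : ⟪x, S x⟫_ℝ = ⟪S x, x⟫_ℝ := real_inner_comm _ _
  have h5 : 0 < ‖x‖ ^ 2 := pow_pos (norm_pos_iff.mpr hx) 2
  have hs : 0 ≤ ⟪x, S x⟫_ℝ := by nlinarith [h1, h2, h5, hpos x]
  rw [div_le_iff₀ hT]
  have h7 : ‖x‖ ^ 2 * ‖x‖ ^ 2 ≤ (⟪x, S x⟫_ℝ * ‖T‖) * ‖x‖ ^ 2 := by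
    calc ‖x‖ ^ 2 * ‖x‖ ^ 2 = ⟪x, x⟫_ℝ ^ 2 := by rw [h2]; ring
    _ ≤ ⟪x, S x⟫_ℝ * ⟪T x, x⟫_ℝ := h1
    _ ≤ ⟪x, S x⟫_ℝ * (‖T‖ * ‖x‖ ^ 2) := mul_le_mul_of_nonneg_left h3 hs
    _ = (⟪x, S x⟫_ℝ * ‖T‖) * ‖x‖ ^ 2 := by ring
  rw [h4] at h7
  exact le_of_mul_le_mul_right h7 h5

lemma aux_upper_inv (T S : E →L[ℝ] E) (hTS : ∀ z, T (S z) = z)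
    (hposS : ∀ z, 0 ≤ ⟪S z, z⟫_ℝ) {α : ℝ} (hα : 0 < α)
    (hlow : ∀ z, α * ‖z‖ ^ 2 ≤ ⟪T z, z⟫_ℝ) (x : E) :
    ⟪S x, x⟫_ℝ ≤ ‖x‖ ^ 2 / α := by
  have h1 : α * ‖S x‖ ^ 2 ≤ ⟪T (S x), S x⟫_ℝ := hlow (S x)
  rw [hTS] at h1
  have h3 : ⟪x, S x⟫_ℝ ≤ ‖x‖ * ‖S x‖ := real_inner_le_norm _ _
  have h4 : ⟪S x, x⟫_ℝ = ⟪x, S x⟫_ℝ := real_inner_comm _ _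
  have h5 : 0 ≤ ⟪S x, x⟫_ℝ := hposS x
  rw [le_div_iff₀ hα]
  nlinarith [norm_nonneg x, norm_nonneg (S x), sq_nonneg (‖x‖ - α * ‖S x‖)]

end auxE

section bridge
variable {d : ℕ}

lemma pos_T {A : Matrix (Fin d) (Fin d) ℝ} (hA : A.PosSemidef) (x : EuclideanSpace ℝ (Fin d)) :
    0 ≤ ⟪(Matrix.toEuclideanCLM (𝕜 := ℝ) A) x, x⟫_ℝ := by
  have h := hA.dotProduct_mulVec_nonneg (WithLp.equiv 2 (Fin d → ℝ) x)
  have he : ∀ i, (Matrix.toEuclideanCLM (𝕜 := ℝ) A) x i = (A *ᵥ (WithLp.equiv 2 _ x)) i :=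
    fun i => congrFun (Matrix.ofLp_toEuclideanCLM (𝕜 := ℝ) A x) i
  have heq : ⟪(Matrix.toEuclideanCLM (𝕜 := ℝ) A) x, x⟫_ℝ
      = star (WithLp.equiv 2 _ x) ⬝ᵥ A *ᵥ (WithLp.equiv 2 _ x) := by
    simp [PiLp.inner_apply, RCLike.inner_apply, dotProduct, mulVec, starRingEnd_apply, he,
      mul_comm]
  rw [heq]; exact h

lemma sym_T {A : Matrix (Fin d) (Fin d) ℝ} (hA : A.IsHermitian) (x y : EuclideanSpace ℝ (Fin d)) :
    ⟪(Matrix.toEuclideanCLM (𝕜 := ℝ) A) x, y⟫_ℝ = ⟪x, (Matrix.toEuclideanCLM (𝕜 := ℝ) A) y⟫_ℝ := by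
  have hst : star A = A := by rw [Matrix.star_eq_conjTranspose]; exact hA
  have hsa : _root_.IsSelfAdjoint (Matrix.toEuclideanCLM (𝕜 := ℝ) A) := by
    have h := map_star (Matrix.toEuclideanCLM (𝕜 := ℝ) (n := Fin d)) A
    rw [hst] at h
    exact h.symm
  exact (ContinuousLinearMap.isSelfAdjoint_iff_isSymmetric.mp hsa) x y

lemma unit_T {A : Matrix (Fin d) (Fin d) ℝ} (hA : IsUnit A.det) (z : EuclideanSpace ℝ (Fin d)) :
    (Matrix.toEuclideanCLM (𝕜 := ℝ) A) ((Matrix.toEuclideanCLM (𝕜 := ℝ) A⁻¹) z) = z := by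
  have h : Matrix.toEuclideanCLM (𝕜 := ℝ) A * Matrix.toEuclideanCLM (𝕜 := ℝ) A⁻¹ = 1 := by
    rw [← _root_.map_mul, Matrix.mul_nonsing_inv _ hA, _root_.map_one]
  calc (Matrix.toEuclideanCLM (𝕜 := ℝ) A) ((Matrix.toEuclideanCLM (𝕜 := ℝ) A⁻¹) z)
      = (Matrix.toEuclideanCLM (𝕜 := ℝ) A * Matrix.toEuclideanCLM (𝕜 := ℝ) A⁻¹) z := rfl
  _ = z := by rw [h]; rfl

lemma smul_posSemidef {A : Matrix (Fin d) (Fin d) ℝ} (hA : A.PosSemidef) {c : ℝ} (hc : 0 ≤ c) :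
    (c • A).PosSemidef := by
  refine Matrix.posSemidef_iff_dotProduct_mulVec.mpr ⟨?_, fun x => ?_⟩
  · unfold Matrix.IsHermitian
    rw [Matrix.conjTranspose_smul, hA.1]
    norm_num
  · rw [Matrix.smul_mulVec, dotProduct_smul]
    exact mul_nonneg hc (hA.dotProduct_mulVec_nonneg x)

lemma entry_deriv (B C0 : Matrix (Fin d) (Fin d) ℝ) (t : ℝ)
    (hM : ((2 * t) • B⁻¹ + C0⁻¹).PosDef) (i j : Fin d) :
    HasDerivAt (fun s => ((2 * s) • B⁻¹ + C0⁻¹)⁻¹ i j)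
      (((-2 : ℝ) • (((2 * t) • B⁻¹ + C0⁻¹)⁻¹ * B⁻¹ * ((2 * t) • B⁻¹ + C0⁻¹)⁻¹)) i j) t := by
  let _i1 := Matrix.instL2OpMetricSpace (m := Fin d) (n := Fin d) (𝕜 := ℝ)
  let _i2 := Matrix.instL2OpNormedAddCommGroup (m := Fin d) (n := Fin d) (𝕜 := ℝ)
  let _i3 := Matrix.instL2OpNormedRing (n := Fin d) (𝕜 := ℝ)
  let _i4 := Matrix.instL2OpNormedSpace (m := Fin d) (n := Fin d) (𝕜 := ℝ)
  let _i5 := Matrix.instL2OpNormedAlgebra (n := Fin d) (𝕜 := ℝ)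
  set M : ℝ → Matrix (Fin d) (Fin d) ℝ := fun s => (2 * s) • B⁻¹ + C0⁻¹ with hMdef
  have hu : IsUnit (M t) := hM.isUnit
  have hMd : HasDerivAt M ((2 : ℝ) • B⁻¹) t := by
    have h1 : HasDerivAt (fun s : ℝ => 2 * s) 2 t := by
      simpa using (hasDerivAt_id t).const_mul (2 : ℝ)
    simpa [hMdef] using (h1.smul_const B⁻¹).add_const C0⁻¹
  have hinv : HasFDerivAt Ring.inverse
      (-ContinuousLinearMap.mulLeftRight ℝ _ ↑hu.unit⁻¹ ↑hu.unit⁻¹) (M t) := by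
    simpa [hu.unit_spec] using hasFDerivAt_ringInverse (𝕜 := ℝ) hu.unit
  have hcomp := hinv.comp_hasDerivAt t hMd
  have hui : (↑hu.unit⁻¹ : Matrix (Fin d) (Fin d) ℝ) = (M t)⁻¹ := by
    have h := Ring.inverse_unit hu.unit
    rw [hu.unit_spec] at h
    rw [Matrix.nonsing_inv_eq_ringInverse]
    exact h.symm
  rw [hui] at hcomp
  let ψ : Matrix (Fin d) (Fin d) ℝ →ₗ[ℝ] ℝ :=
    { toFun := fun A => A i j, map_add' := fun _ _ => rfl, map_smul' := fun _ _ => rfl }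
  let φ : Matrix (Fin d) (Fin d) ℝ →L[ℝ] ℝ := LinearMap.toContinuousLinearMap ψ
  have h2 := φ.hasFDerivAt.comp_hasDerivAt t hcomp
  have h3 : ⇑φ ∘ Ring.inverse ∘ M = fun s => (M s)⁻¹ i j := by
    funext s
    simp [φ, ψ, Function.comp, ← Matrix.nonsing_inv_eq_ringInverse]
    rfl
  rw [h3] at h2
  have h4 : φ ((-(ContinuousLinearMap.mulLeftRight ℝ _ (M t)⁻¹ (M t)⁻¹)) ((2:ℝ) • B⁻¹))
      = ((-2 : ℝ) • ((M t)⁻¹ * B⁻¹ * (M t)⁻¹)) i j := by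
    simp only [ContinuousLinearMap.mulLeftRight_apply, φ, ψ,
      LinearMap.coe_toContinuousLinearMap', LinearMap.coe_mk, AddHom.coe_mk]
    simp [Matrix.mul_smul, Matrix.smul_mul]
    rfl
  rw [h4] at h2
  exact h2

lemma norm_bound (B C0 : Matrix (Fin d) (Fin d) ℝ) (hB : B.PosDef) (hC0 : C0.PosDef)
    (t : ℝ) (ht : 0 ≤ t) (hM : ((2 * t) • B⁻¹ + C0⁻¹).PosDef) :
    ‖Matrix.toEuclideanCLM (𝕜 := ℝ) (((2 * t) • B⁻¹ + C0⁻¹)⁻¹)‖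
      ≤ max ‖Matrix.toEuclideanCLM (𝕜 := ℝ) C0‖ ‖Matrix.toEuclideanCLM (𝕜 := ℝ) B‖ / (2 * t + 1) := by
  have h2t1 : (0:ℝ) < 2 * t + 1 := by linarith
  rcases Nat.eq_zero_or_pos d with rfl | hd
  · have h0 : Matrix.toEuclideanCLM (𝕜 := ℝ) (((2 * t) • B⁻¹ + C0⁻¹)⁻¹) = 0 :=
      Subsingleton.elim _ _
    rw [h0, norm_zero]
    positivity
  -- d > 0
  have hBd : B⁻¹.PosDef := hB.inv
  have hC0d : C0⁻¹.PosDef := hC0.inv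
  have hCd : (((2 * t) • B⁻¹ + C0⁻¹)⁻¹).PosDef := hM.inv
  set TB := Matrix.toEuclideanCLM (𝕜 := ℝ) B with hTB
  set TC0 := Matrix.toEuclideanCLM (𝕜 := ℝ) C0 with hTC0
  have hne : (fun _ : Fin d => (1:ℝ)) ≠ 0 := by
    intro h1
    have := congrFun h1 ⟨0, hd⟩
    simpa using this
  have hB0 : B ≠ 0 := by
    intro h
    have := hB.dotProduct_mulVec_pos hne
    rw [h] at this
    simpa using this
  have hC00 : C0 ≠ 0 := by
    intro h
    have := hC0.dotProduct_mulVec_pos hne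
    rw [h] at this
    simpa using this
  have hTBpos : 0 < ‖TB‖ := by
    rw [norm_pos_iff]
    intro h0
    rw [hTB] at h0
    exact hB0 ((map_eq_zero_iff _ (Matrix.toEuclideanCLM (𝕜 := ℝ) (n := Fin d)).injective).mp h0)
  have hTC0pos : 0 < ‖TC0‖ := by
    rw [norm_pos_iff]
    intro h0
    rw [hTC0] at h0
    exact hC00 ((map_eq_zero_iff _ (Matrix.toEuclideanCLM (𝕜 := ℝ) (n := Fin d)).injective).mp h0)
  set m := max ‖TC0‖ ‖TB‖ with hm
  have hmpos : 0 < m := lt_max_of_lt_right hTBpos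
  set α := (2 * t + 1) / m with hα
  have hαpos : 0 < α := div_pos h2t1 hmpos
  -- lower bounds for the inverses
  have hBlow : ∀ x : EuclideanSpace ℝ (Fin d), ‖x‖ ^ 2 / ‖TB‖ ≤
      ⟪(Matrix.toEuclideanCLM (𝕜 := ℝ) B⁻¹) x, x⟫_ℝ :=
    aux_lower_inv TB _ (unit_T hB.det_pos.ne'.isUnit) (pos_T hB.posSemidef) (sym_T hB.isHermitian)
  have hC0low : ∀ x : EuclideanSpace ℝ (Fin d), ‖x‖ ^ 2 / ‖TC0‖ ≤
      ⟪(Matrix.toEuclideanCLM (𝕜 := ℝ) C0⁻¹) x, x⟫_ℝ :=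
    aux_lower_inv TC0 _ (unit_T hC0.det_pos.ne'.isUnit) (pos_T hC0.posSemidef)
      (sym_T hC0.isHermitian)
  have hMlow : ∀ x : EuclideanSpace ℝ (Fin d), α * ‖x‖ ^ 2 ≤
      ⟪(Matrix.toEuclideanCLM (𝕜 := ℝ) ((2 * t) • B⁻¹ + C0⁻¹)) x, x⟫_ℝ := by
    intro x
    have he : (Matrix.toEuclideanCLM (𝕜 := ℝ) ((2 * t) • B⁻¹ + C0⁻¹)) x
        = (2 * t) • (Matrix.toEuclideanCLM (𝕜 := ℝ) B⁻¹) x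
          + (Matrix.toEuclideanCLM (𝕜 := ℝ) C0⁻¹) x := by
      rw [_root_.map_add, _root_.map_smul]
      rfl
    rw [he, inner_add_left, real_inner_smul_left]
    have h1 : ‖x‖ ^ 2 / ‖TB‖ ≥ ‖x‖ ^ 2 / m := by
      gcongr
      exact le_max_right _ _
    have h2 : ‖x‖ ^ 2 / ‖TC0‖ ≥ ‖x‖ ^ 2 / m := by
      gcongr
      exact le_max_left _ _
    have h3 := hBlow x
    have h4 := hC0low x
    have h5 : α * ‖x‖ ^ 2 = (2 * t) * (‖x‖ ^ 2 / m) + ‖x‖ ^ 2 / m := by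
      rw [hα]
      field_simp
    rw [h5]
    have h6 : (2 * t) * (‖x‖ ^ 2 / m) ≤ (2 * t) * ⟪(Matrix.toEuclideanCLM (𝕜 := ℝ) B⁻¹) x, x⟫_ℝ :=
      mul_le_mul_of_nonneg_left (le_trans h1.le h3) (by linarith)
    linarith
  have hCup : ∀ x : EuclideanSpace ℝ (Fin d),
      ⟪(Matrix.toEuclideanCLM (𝕜 := ℝ) (((2 * t) • B⁻¹ + C0⁻¹)⁻¹)) x, x⟫_ℝ ≤ ‖x‖ ^ 2 / α :=
    aux_upper_inv (Matrix.toEuclideanCLM (𝕜 := ℝ) ((2 * t) • B⁻¹ + C0⁻¹)) _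
      (unit_T hM.det_pos.ne'.isUnit) (pos_T hCd.posSemidef) hαpos hMlow
  have hβ : (0:ℝ) ≤ m / (2 * t + 1) := le_of_lt (div_pos hmpos h2t1)
  refine aux_norm_le _ (pos_T hCd.posSemidef) (sym_T hCd.isHermitian) hβ fun x => ?_
  have := hCup x
  have heq : ‖x‖ ^ 2 / α = m / (2 * t + 1) * ‖x‖ ^ 2 := by
    rw [hα, div_div_eq_mul_div]
    ring
  linarith [heq ▸ this]

end bridge

theorem stmt13 {d : ℕ} (B C0 : Matrix (Fin d) (Fin d) ℝ)
    (hB : B.PosDef) (hC0 : C0.PosDef)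
    (C : ℝ → Matrix (Fin d) (Fin d) ℝ)
    (hC : C = fun t => ((2 * t) • B⁻¹ + C0⁻¹)⁻¹) :
    C 0 = C0 ∧
    (∀ t, 0 ≤ t → ∀ i j, HasDerivAt (fun s => C s i j)
      (((-2 : ℝ) • (C t * B⁻¹ * C t)) i j) t) ∧
    ∀ t, 0 ≤ t → opNorm (C t) ≤ max (opNorm C0) (opNorm B) / (2 * t + 1) := by
  subst hC
  have hMpos : ∀ t : ℝ, 0 ≤ t → ((2 * t) • B⁻¹ + C0⁻¹).PosDef := fun t ht =>
    Matrix.PosDef.posSemidef_add (smul_posSemidef (Matrix.PosDef.posSemidef hB.inv) (by linarith)) hC0.inv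
  refine ⟨?_, ?_, ?_⟩
  · show ((2 * (0:ℝ)) • B⁻¹ + C0⁻¹)⁻¹ = C0
    rw [mul_zero, zero_smul, zero_add, Matrix.nonsing_inv_nonsing_inv _ hC0.det_pos.ne'.isUnit]
  · intro t ht i j
    exact entry_deriv B C0 t (hMpos t ht) i j
  · intro t ht
    exact norm_bound B C0 hB hC0 t ht (hMpos t ht)
end

section
/- Let C : [0,∞) → ℝ^{d×d} take values in symmetric matrices, B symmetric positive definite, and let U(s,t) solve ∂_t U(s,t) = −C(t) B^{−1} U(s,t), U(s,s) = I. If C solves C' = −2CB^{−1}C + 2σC with C(s) invertible, then U(s,t)ᵀ C(t)^{−1} U(s,t) = e^{−2σ(t−s)} C(s)^{−1} for all t ≥ s. -/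
open MeasureTheory Matrix

section aux

variable {d : ℕ}

private lemma matDeriv_mul {A B : ℝ → Matrix (Fin d) (Fin d) ℝ}
    {A' B' : Matrix (Fin d) (Fin d) ℝ} {t : ℝ}
    (hA : ∀ i j, HasDerivAt (fun r => A r i j) (A' i j) t)
    (hB : ∀ i j, HasDerivAt (fun r => B r i j) (B' i j) t) :
    ∀ i j, HasDerivAt (fun r => (A r * B r) i j) ((A' * B t + A t * B') i j) t := by
  intro i j
  have h : HasDerivAt (fun r => ∑ k, A r i k * B r k j)
      (∑ k, (A' i k * B t k j + A t i k * B' k j)) t :=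
    HasDerivAt.fun_sum fun k _ => (hA i k).mul (hB k j)
  simpa [Matrix.mul_apply, Matrix.add_apply, Finset.sum_add_distrib] using h

private lemma matDiff_det {A : ℝ → Matrix (Fin d) (Fin d) ℝ} {t : ℝ}
    (hA : ∀ i j, DifferentiableAt ℝ (fun r => A r i j) t) :
    DifferentiableAt ℝ (fun r => (A r).det) t := by
  simp only [Matrix.det_apply']
  exact DifferentiableAt.fun_sum fun σ _ =>
    ((DifferentiableAt.fun_finsetProd (fun i _ => hA (σ i) i))).const_mul _

private lemma matDiff_inv {A : ℝ → Matrix (Fin d) (Fin d) ℝ} {t : ℝ}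
    (hA : ∀ i j, DifferentiableAt ℝ (fun r => A r i j) t)
    (hdet : (A t).det ≠ 0) :
    ∀ i j, DifferentiableAt ℝ (fun r => (A r)⁻¹ i j) t := by
  intro i j
  have hadj : DifferentiableAt ℝ (fun r => (A r).adjugate i j) t := by
    simp only [Matrix.adjugate_apply]
    apply matDiff_det
    intro i' j'
    rcases eq_or_ne i' j with rfl | h
    · simp only [Matrix.updateRow_self]
      exact differentiableAt_const _
    · simp only [Matrix.updateRow_ne h]
      exact hA i' j'
  have heq : (fun r => (A r)⁻¹ i j) = fun r => ((A r).det)⁻¹ * (A r).adjugate i j := by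
    funext r
    rw [Matrix.inv_def, Matrix.smul_apply, Ring.inverse_eq_inv', smul_eq_mul]
  rw [heq]
  exact ((matDiff_det hA).inv hdet).mul hadj

private lemma matDeriv_inv {C : ℝ → Matrix (Fin d) (Fin d) ℝ}
    {C' : Matrix (Fin d) (Fin d) ℝ} {t : ℝ}
    (hC : ∀ i j, HasDerivAt (fun r => C r i j) (C' i j) t)
    (hdet : IsUnit (C t).det) :
    ∀ i j, HasDerivAt (fun r => (C r)⁻¹ i j)
      ((-((C t)⁻¹ * C' * (C t)⁻¹)) i j) t := by
  have hdiffC : ∀ i j, DifferentiableAt ℝ (fun r => C r i j) t := fun i j =>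
    (hC i j).differentiableAt
  have hdet0 : (C t).det ≠ 0 := hdet.ne_zero
  have hdiffN : ∀ i j, DifferentiableAt ℝ (fun r => (C r)⁻¹ i j) t := matDiff_inv hdiffC hdet0
  set N' : Matrix (Fin d) (Fin d) ℝ := Matrix.of fun i j => deriv (fun r => (C r)⁻¹ i j) t
    with hN'def
  have hN : ∀ i j, HasDerivAt (fun r => (C r)⁻¹ i j) (N' i j) t := fun i j =>
    (hdiffN i j).hasDerivAt
  have hdetcont : ContinuousAt (fun r => (C r).det) t := (matDiff_det hdiffC).continuousAt
  have hev : ∀ᶠ r in nhds t, (C r) * (C r)⁻¹ = 1 := by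
    filter_upwards [hdetcont.eventually_ne hdet0] with r hr
    exact Matrix.mul_nonsing_inv _ (isUnit_iff_ne_zero.mpr hr)
  have key : C' * (C t)⁻¹ + C t * N' = 0 := by
    ext i j
    have h1 : HasDerivAt (fun r => (C r * (C r)⁻¹) i j) 0 t := by
      refine HasDerivAt.congr_of_eventuallyEq
        (hasDerivAt_const t ((1 : Matrix (Fin d) (Fin d) ℝ) i j)) ?_
      filter_upwards [hev] with r hr
      rw [hr]
    have h2 := matDeriv_mul hC hN i j
    have := h2.unique h1
    simpa [Matrix.zero_apply] using this
  have hCN' : C t * N' = -(C' * (C t)⁻¹) := eq_neg_of_add_eq_zero_right key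
  have hfin : N' = -((C t)⁻¹ * C' * (C t)⁻¹) := by
    calc N' = (C t)⁻¹ * (C t * N') := (Matrix.nonsing_inv_mul_cancel_left _ _ hdet).symm
    _ = (C t)⁻¹ * -(C' * (C t)⁻¹) := by rw [hCN']
    _ = -((C t)⁻¹ * C' * (C t)⁻¹) := by rw [Matrix.mul_neg, Matrix.mul_assoc]
  intro i j
  rw [← hfin]
  exact hN i j

end aux

theorem stmt15 {d : ℕ} (B : Matrix (Fin d) (Fin d) ℝ) (hB : B.PosDef)
    (σ : ℝ) (hσ : 0 ≤ σ) (s : ℝ)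
    (C U : ℝ → Matrix (Fin d) (Fin d) ℝ)
    (hCsym : ∀ t, (C t).IsSymm)
    (hCode : ∀ t, ∀ i j, HasDerivAt (fun r => C r i j)
      (((-2 : ℝ) • (C t * B⁻¹ * C t) + (2 * σ) • C t) i j) t)
    (hCpos : ∀ t, s ≤ t → (C t).PosDef)
    (hUs : U s = 1)
    (hUode : ∀ t, ∀ i j, HasDerivAt (fun r => U r i j) ((-(C t * B⁻¹ * U t)) i j) t) :
    ∀ t, s ≤ t → (U t)ᵀ * (C t)⁻¹ * U t = Real.exp (-2 * σ * (t - s)) • (C s)⁻¹ := by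
  have hBt : (B⁻¹)ᵀ = B⁻¹ := by
    rw [Matrix.transpose_nonsing_inv]
    congr 1
    have h := hB.isHermitian
    rwa [Matrix.IsHermitian, Matrix.conjTranspose_eq_transpose_of_trivial] at h
  set E : ℝ → ℝ := fun r => Real.exp (2 * σ * (r - s)) with hEdef
  have key : ∀ τ, s ≤ τ → ∀ i j,
      HasDerivAt (fun r => E r * ((U r)ᵀ * (C r)⁻¹ * U r) i j) 0 τ := by
    intro τ hτ i j
    have hdet : IsUnit (C τ).det := isUnit_iff_ne_zero.mpr (hCpos τ hτ).det_pos.ne'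
    have hNC : (C τ)⁻¹ * C τ = 1 := Matrix.nonsing_inv_mul _ hdet
    have hCN : C τ * (C τ)⁻¹ = 1 := Matrix.mul_nonsing_inv _ hdet
    have hCs : (C τ)ᵀ = C τ := hCsym τ
    set N : Matrix (Fin d) (Fin d) ℝ := (C τ)⁻¹ with hNdef
    set Cd : Matrix (Fin d) (Fin d) ℝ := (-2 : ℝ) • (C τ * B⁻¹ * C τ) + (2 * σ) • C τ with hCd
    set Ud : Matrix (Fin d) (Fin d) ℝ := -(C τ * B⁻¹ * U τ) with hUd
    have hC : ∀ i j, HasDerivAt (fun r => C r i j) (Cd i j) τ := hCode τ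
    have hU : ∀ i j, HasDerivAt (fun r => U r i j) (Ud i j) τ := hUode τ
    have hNder : ∀ i j, HasDerivAt (fun r => (C r)⁻¹ i j) ((-(N * Cd * N)) i j) τ :=
      matDeriv_inv hC hdet
    have hUT : ∀ i j, HasDerivAt (fun r => (U r)ᵀ i j) ((Udᵀ) i j) τ := by
      intro i j
      simpa [Matrix.transpose_apply] using hU j i
    set D : Matrix (Fin d) (Fin d) ℝ :=
      (Udᵀ * N + (U τ)ᵀ * -(N * Cd * N)) * U τ + ((U τ)ᵀ * N) * Ud with hD
    have hMder : ∀ i j, HasDerivAt (fun r => ((U r)ᵀ * (C r)⁻¹ * U r) i j) (D i j) τ := by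
      have h1 := matDeriv_mul (A := fun r => (U r)ᵀ) (B := fun r => (C r)⁻¹) hUT hNder
      exact matDeriv_mul (A := fun r => (U r)ᵀ * (C r)⁻¹) (B := U) h1 hU
    -- matrix algebra: (2σ) • (Uᵀ N U) + D = 0
    have p1 : N * (C τ * B⁻¹ * C τ) * N = B⁻¹ := by
      calc N * (C τ * B⁻¹ * C τ) * N = N * (C τ * (B⁻¹ * (C τ * N))) := by
            simp only [Matrix.mul_assoc]
      _ = N * (C τ * B⁻¹) := by rw [hCN, Matrix.mul_one]
      _ = B⁻¹ := by rw [← Matrix.mul_assoc, hNC, Matrix.one_mul]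
    have p2 : N * C τ * N = N := by rw [hNC, Matrix.one_mul]
    have e1 : N * Cd * N = (-2 : ℝ) • B⁻¹ + (2 * σ) • N := by
      rw [hCd, Matrix.mul_add, Matrix.add_mul, Matrix.mul_smul, Matrix.mul_smul,
        Matrix.smul_mul, Matrix.smul_mul, p1, p2]
    have e2 : Udᵀ = -((U τ)ᵀ * B⁻¹ * C τ) := by
      rw [hUd]
      simp only [Matrix.transpose_neg, Matrix.transpose_mul, hBt, hCs, Matrix.mul_assoc]
    have q1 : (Udᵀ * N) * U τ = -((U τ)ᵀ * B⁻¹ * U τ) := by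
      rw [e2]
      simp only [Matrix.neg_mul, Matrix.mul_assoc]
      rw [← Matrix.mul_assoc (C τ) N (U τ), hCN, Matrix.one_mul]
    have q2 : ((U τ)ᵀ * -(N * Cd * N)) * U τ =
        (2 : ℝ) • ((U τ)ᵀ * B⁻¹ * U τ) - (2 * σ) • ((U τ)ᵀ * N * U τ) := by
      rw [e1]
      have hneg : -((-2 : ℝ) • B⁻¹ + (2 * σ) • N) =
          (2 : ℝ) • B⁻¹ + (-(2 * σ)) • N := by module
      rw [hneg, Matrix.mul_add, Matrix.add_mul, Matrix.mul_smul, Matrix.mul_smul,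
        Matrix.smul_mul, Matrix.smul_mul, neg_smul, ← sub_eq_add_neg]
    have q3 : ((U τ)ᵀ * N) * Ud = -((U τ)ᵀ * B⁻¹ * U τ) := by
      rw [hUd]
      simp only [Matrix.mul_neg, Matrix.mul_assoc]
      rw [← Matrix.mul_assoc N (C τ) (B⁻¹ * U τ), hNC, Matrix.one_mul]
    have key2 : (2 * σ) • ((U τ)ᵀ * N * U τ) + D = 0 := by
      rw [hD, Matrix.add_mul, q1, q2, q3]
      ext i j
      simp only [Matrix.add_apply, Matrix.sub_apply, Matrix.neg_apply, Matrix.smul_apply,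
        Matrix.zero_apply, smul_eq_mul]
      ring
    have hE : HasDerivAt E (Real.exp (2 * σ * (τ - s)) * (2 * σ)) τ := by
      have h1 : HasDerivAt (fun r : ℝ => 2 * σ * (r - s)) (2 * σ) τ := by
        simpa using ((hasDerivAt_id τ).sub_const s).const_mul (2 * σ)
      simpa using h1.exp
    have hprod := hE.mul (hMder i j)
    have hzero : Real.exp (2 * σ * (τ - s)) * (2 * σ) * ((U τ)ᵀ * N * U τ) i j
        + E τ * D i j = 0 := by
      have hk : ((2 * σ) • ((U τ)ᵀ * N * U τ) + D) i j = (0 : Matrix (Fin d) (Fin d) ℝ) i j := by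
        rw [key2]
      simp only [Matrix.add_apply, Matrix.smul_apply, Matrix.zero_apply, smul_eq_mul] at hk
      have hE' : E τ = Real.exp (2 * σ * (τ - s)) := rfl
      nlinarith [hk, Real.exp_pos (2 * σ * (τ - s)), hE']
    rw [← hzero]
    exact hprod
  intro t ht
  have hconst : ∀ i j, E t * ((U t)ᵀ * (C t)⁻¹ * U t) i j
      = E s * ((U s)ᵀ * (C s)⁻¹ * U s) i j := by
    intro i j
    refine constant_of_has_deriv_right_zero (f := fun r => E r * ((U r)ᵀ * (C r)⁻¹ * U r) i j)
      (a := s) (b := t) ?_ ?_ t ⟨ht, le_refl t⟩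
    · intro r hr
      exact ((key r hr.1 i j).continuousAt).continuousWithinAt
    · intro x hx
      exact (key x hx.1 i j).hasDerivWithinAt
  have hmat : E t • ((U t)ᵀ * (C t)⁻¹ * U t) = (C s)⁻¹ := by
    ext i j
    rw [Matrix.smul_apply, smul_eq_mul, hconst i j]
    simp [hUs, hEdef]
  have hone : Real.exp (-2 * σ * (t - s)) * E t = 1 := by
    have h0 : -2 * σ * (t - s) + 2 * σ * (t - s) = 0 := by ring
    rw [hEdef]
    rw [← Real.exp_add, h0, Real.exp_zero]
  rw [← hmat, smul_smul, hone, one_smul]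
end

section
/- Let B be symmetric positive definite, σ ≥ 0, u0 ∈ ℝ^d, and let C(t) solve C' = −2CB^{−1}C + 2σC with C(0) positive definite. If μ(t) solves μ' = −C(t)B^{−1}(μ − u0) and Σ(t) solves Σ' = −C B^{−1} Σ − Σ B^{−1} C + 2σC with Σ(0) = 0, then Σ(t) = (1 − e^{−2σt}) C(t) for all t ≥ 0. -/
open MeasureTheory Matrix

theorem stmt18 {d : ℕ} (B : Matrix (Fin d) (Fin d) ℝ) (hB : B.PosDef)
    (σ : ℝ) (hσ : 0 ≤ σ) (u0 : Fin d → ℝ)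
    (C Sg : ℝ → Matrix (Fin d) (Fin d) ℝ) (μ : ℝ → Fin d → ℝ)
    (hC0 : (C 0).PosDef)
    (hCode : ∀ t, ∀ i j, HasDerivAt (fun r => C r i j)
      (((-2 : ℝ) • (C t * B⁻¹ * C t) + (2 * σ) • C t) i j) t)
    (hμ : ∀ t, ∀ i, HasDerivAt (fun r => μ r i) ((-(C t *ᵥ (B⁻¹ *ᵥ (μ t - u0)))) i) t)
    (hSg0 : Sg 0 = 0)
    (hSgode : ∀ t, ∀ i j, HasDerivAt (fun r => Sg r i j)
      ((-(C t * B⁻¹ * Sg t) - Sg t * B⁻¹ * C t + (2 * σ) • C t) i j) t) :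
    ∀ t, 0 ≤ t → Sg t = (1 - Real.exp (-2 * σ * t)) • C t := by
  intro T hT
  have hCcont : ∀ i j, Continuous (fun s => C s i j) := fun i j =>
    continuous_iff_continuousAt.2 fun s => (hCode s i j).continuousAt
  have hSgcont : ∀ i j, Continuous (fun s => Sg s i j) := fun i j =>
    continuous_iff_continuousAt.2 fun s => (hSgode s i j).continuousAt
  set e : ℝ → ℝ := fun s => Real.exp (-2 * σ * s) with he
  have hecont : Continuous e := by continuity
  set D : ℝ → Matrix (Fin d) (Fin d) ℝ := fun s => Sg s - (1 - e s) • C s with hD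
  set F : ℝ → (Fin d × Fin d → ℝ) := fun s p => D s p.1 p.2 with hF
  set F' : ℝ → (Fin d × Fin d → ℝ) :=
    fun s p => (-(C s * B⁻¹ * D s) - D s * B⁻¹ * C s) p.1 p.2 with hF'
  -- derivative of e
  have hederiv : ∀ s, HasDerivAt e (-2 * σ * e s) s := by
    intro s
    have h : HasDerivAt (fun x : ℝ => -2 * σ * x) (-2 * σ) s := by
      simpa using (hasDerivAt_id s).const_mul (-2 * σ)
    have h2 : HasDerivAt e (Real.exp (-2 * σ * s) * (-2 * σ)) s := h.exp
    convert h2 using 1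
    simp only [he]
    ring
  have hderiv : ∀ s, HasDerivAt F (F' s) s := by
    intro s
    rw [hasDerivAt_pi]
    intro p
    obtain ⟨i, j⟩ := p
    have h1 := hSgode s i j
    have h2 : HasDerivAt (fun r => (1 - e r) * C r i j)
        ((2 * σ * e s) * C s i j +
          (1 - e s) * (((-2 : ℝ) • (C s * B⁻¹ * C s) + (2 * σ) • C s) i j)) s := by
      have hc : HasDerivAt (fun r => 1 - e r) (2 * σ * e s) s := by
        have := (hederiv s).const_sub 1
        exact this.congr_deriv (by ring)
      exact hc.mul (hCode s i j)
    have := h1.sub h2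
    refine HasDerivAt.congr_deriv this ?_
    simp only [hF', hD, Matrix.mul_sub, Matrix.sub_mul, Matrix.mul_smul, Matrix.smul_mul,
      Matrix.sub_apply, Matrix.add_apply, Matrix.neg_apply, Matrix.smul_apply, smul_eq_mul]
    ring
  have hFcont : Continuous F := by
    apply continuous_pi
    intro p
    exact (hSgcont p.1 p.2).sub ((continuous_const.sub hecont).mul (hCcont p.1 p.2))
  -- bound function
  set G : ℝ → ℝ := fun s => ∑ p : (Fin d × Fin d) × Fin d,
      (|(C s * B⁻¹) p.1.1 p.2| + |(B⁻¹ * C s) p.2 p.1.2|) with hG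
  have hGcont : Continuous G := by
    apply continuous_finset_sum
    intro p _
    apply Continuous.add
    · apply continuous_abs.comp
      simp only [Matrix.mul_apply]
      exact continuous_finset_sum _ fun k _ => (hCcont _ _).mul continuous_const
    · apply continuous_abs.comp
      simp only [Matrix.mul_apply]
      exact continuous_finset_sum _ fun k _ => continuous_const.mul (hCcont _ _)
  obtain ⟨K, hK⟩ : ∃ K, ∀ s ∈ Set.Icc (0:ℝ) T, G s ≤ K := by
    rcases (isCompact_Icc (a := (0:ℝ)) (b := T)).exists_bound_of_continuousOn
      hGcont.continuousOn with ⟨K, hK⟩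
    exact ⟨K, fun s hs => (le_abs_self _).trans (le_of_eq (Real.norm_eq_abs _).symm) |>.trans (hK s hs)⟩
  have bound : ∀ s ∈ Set.Ico (0:ℝ) T, ‖F' s‖ ≤ K * ‖F s‖ + 0 := by
    intro s hs
    rw [add_zero]
    have hKn : 0 ≤ K * ‖F s‖ := by
      have h0 : G s ≤ K := hK s ⟨hs.1, le_of_lt hs.2⟩
      have : (0:ℝ) ≤ G s := Finset.sum_nonneg fun p _ => by positivity
      exact mul_nonneg (this.trans h0) (norm_nonneg _)
    rw [pi_norm_le_iff_of_nonneg hKn]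
    intro p
    obtain ⟨i, j⟩ := p
    have hentry : ∀ (k l : Fin d), |D s k l| ≤ ‖F s‖ := by
      intro k l
      have := norm_le_pi_norm (F s) (k, l)
      simpa [hF, Real.norm_eq_abs] using this
    have h1 : |(C s * B⁻¹ * D s) i j| ≤ (∑ k, |(C s * B⁻¹) i k|) * ‖F s‖ := by
      rw [Matrix.mul_apply, Finset.sum_mul]
      refine (Finset.abs_sum_le_sum_abs _ _).trans (Finset.sum_le_sum fun k _ => ?_)
      rw [abs_mul]
      exact mul_le_mul_of_nonneg_left (hentry k j) (abs_nonneg _)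
    have h2 : |(D s * B⁻¹ * C s) i j| ≤ (∑ k, |(B⁻¹ * C s) k j|) * ‖F s‖ := by
      have : D s * B⁻¹ * C s = D s * (B⁻¹ * C s) := by rw [Matrix.mul_assoc]
      rw [this, Matrix.mul_apply, Finset.sum_mul]
      refine (Finset.abs_sum_le_sum_abs _ _).trans (Finset.sum_le_sum fun k _ => ?_)
      rw [abs_mul, mul_comm (|(B⁻¹ * C s) k j|)]
      exact mul_le_mul_of_nonneg_right (hentry i k) (abs_nonneg _)
    have hsum : (∑ k, |(C s * B⁻¹) i k|) + (∑ k, |(B⁻¹ * C s) k j|) ≤ G s := by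
      have : (∑ k, |(C s * B⁻¹) i k|) + (∑ k, |(B⁻¹ * C s) k j|)
          = ∑ k, (|(C s * B⁻¹) i k| + |(B⁻¹ * C s) k j|) := by
        rw [Finset.sum_add_distrib]
      rw [this, hG]
      have := Finset.sum_le_sum_of_subset_of_nonneg
        (Finset.image (fun k : Fin d => (((i, j), k) : (Fin d × Fin d) × Fin d)) Finset.univ).subset_univ
        (fun p _ _ => by positivity)
        (f := fun p : (Fin d × Fin d) × Fin d => |(C s * B⁻¹) p.1.1 p.2| + |(B⁻¹ * C s) p.2 p.1.2|)
      refine le_trans (le_of_eq ?_) this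
      rw [Finset.sum_image (by intro a _ b _ h; simpa using h)]
    calc ‖F' s (i, j)‖ = |(-(C s * B⁻¹ * D s) - D s * B⁻¹ * C s) i j| := by
          rw [hF', Real.norm_eq_abs]
      _ ≤ |(C s * B⁻¹ * D s) i j| + |(D s * B⁻¹ * C s) i j| := by
          simp only [Matrix.sub_apply, Matrix.neg_apply]
          calc |-(C s * B⁻¹ * D s) i j - (D s * B⁻¹ * C s) i j|
              ≤ |-(C s * B⁻¹ * D s) i j| + |(D s * B⁻¹ * C s) i j| := abs_sub _ _
            _ = _ := by rw [abs_neg]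
      _ ≤ (∑ k, |(C s * B⁻¹) i k|) * ‖F s‖ + (∑ k, |(B⁻¹ * C s) k j|) * ‖F s‖ :=
          add_le_add h1 h2
      _ = ((∑ k, |(C s * B⁻¹) i k|) + (∑ k, |(B⁻¹ * C s) k j|)) * ‖F s‖ := by ring
      _ ≤ G s * ‖F s‖ := mul_le_mul_of_nonneg_right hsum (norm_nonneg _)
      _ ≤ K * ‖F s‖ := mul_le_mul_of_nonneg_right (hK s ⟨hs.1, le_of_lt hs.2⟩) (norm_nonneg _)
  have hF0 : ‖F 0‖ ≤ 0 := by
    have : F 0 = 0 := by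
      funext p
      simp [hF, hD, hSg0, he]
    simp [this]
  have main := norm_le_gronwallBound_of_norm_deriv_right_le
    (hFcont.continuousOn) (fun x _ => (hderiv x).hasDerivWithinAt) hF0 bound
  have hFT : ‖F T‖ ≤ 0 := by
    have := main T ⟨hT, le_refl T⟩
    rwa [gronwallBound_ε0_δ0] at this
  have hFT0 : F T = 0 := by
    have := norm_le_zero_iff.1 hFT
    exact this
  funext i j
  have := congrFun hFT0 (i, j)
  simp only [hF, hD, Matrix.sub_apply, Matrix.smul_apply, smul_eq_mul, Pi.zero_apply] at this
  rw [Matrix.smul_apply, smul_eq_mul]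
  linarith [this]
end

section
/- Let C1(t), C2(t) be two solutions of the matrix Riccati ODE C' = −2CB^{−1}C + 2σC with positive definite initial data, B symmetric positive definite, σ ≥ 0. Then C1(t)^{−1} − C2(t)^{−1} = e^{−2σt}(C1(0)^{−1} − C2(0)^{−1}), and hence ‖C1(t) − C2(t)‖_F ≤ ‖C1(t)‖₂ ‖C2(t)‖₂ ‖C1(0)^{−1} − C2(0)^{−1}‖_F e^{−2σt}. -/
open MeasureTheory Matrix

noncomputable def frob {d : ℕ} (M : Matrix (Fin d) (Fin d) ℝ) : ℝ :=
  Real.sqrt (∑ i, ∑ j, M i j ^ 2)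

/-! ### Auxiliary lemmas about `frob` and `opNorm` -/

lemma frob_nonneg {d : ℕ} (M : Matrix (Fin d) (Fin d) ℝ) : 0 ≤ frob M := Real.sqrt_nonneg _

lemma frob_sq {d : ℕ} (M : Matrix (Fin d) (Fin d) ℝ) : frob M ^ 2 = ∑ i, ∑ j, M i j ^ 2 := by
  rw [frob, Real.sq_sqrt]
  exact Finset.sum_nonneg fun _ _ => Finset.sum_nonneg fun _ _ => sq_nonneg _

lemma frob_le_of_sq_le_sq {d : ℕ} {M : Matrix (Fin d) (Fin d) ℝ} {c : ℝ} (hc : 0 ≤ c)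
    (h : frob M ^ 2 ≤ c ^ 2) : frob M ≤ c := by
  nlinarith [frob_nonneg M]

lemma frob_mul_le {d : ℕ} (M N : Matrix (Fin d) (Fin d) ℝ) :
    frob (M * N) ≤ frob M * frob N := by
  apply frob_le_of_sq_le_sq (mul_nonneg (frob_nonneg M) (frob_nonneg N))
  rw [mul_pow, frob_sq, frob_sq, frob_sq]
  calc ∑ i, ∑ j, (M * N) i j ^ 2
      ≤ ∑ i, ∑ j, (∑ k, M i k ^ 2) * (∑ k, N k j ^ 2) := by
        refine Finset.sum_le_sum fun i _ => Finset.sum_le_sum fun j _ => ?_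
        rw [Matrix.mul_apply]
        exact Finset.sum_mul_sq_le_sq_mul_sq _ _ _
    _ = (∑ i, ∑ k, M i k ^ 2) * (∑ k, ∑ j, N k j ^ 2) := by
        rw [Finset.sum_mul]
        refine Finset.sum_congr rfl fun i _ => ?_
        rw [← Finset.mul_sum, Finset.sum_comm]

lemma mulVec_sq_sum_le {d : ℕ} (A : Matrix (Fin d) (Fin d) ℝ) (x : Fin d → ℝ) :
    ∑ i, (A.mulVec x i) ^ 2 ≤ opNorm A ^ 2 * ∑ i, (x i) ^ 2 := by
  have key : ‖((WithLp.equiv 2 _).symm (A *ᵥ x) : EuclideanSpace ℝ (Fin d))‖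
      ≤ opNorm A * ‖((WithLp.equiv 2 _).symm x : EuclideanSpace ℝ (Fin d))‖ := by
    have e1 : ((WithLp.equiv 2 _).symm (A *ᵥ x) : EuclideanSpace ℝ (Fin d))
        = Matrix.toEuclideanCLM (𝕜 := ℝ) A ((WithLp.equiv _ _).symm x) := by
      exact (toEuclideanCLM_toLp A x).symm
    rw [e1]
    exact ContinuousLinearMap.le_opNorm _ _
  have hn : ∀ y : Fin d → ℝ, ‖((WithLp.equiv 2 _).symm y : EuclideanSpace ℝ (Fin d))‖
      = Real.sqrt (∑ i, (y i)^2) := by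
    intro y
    rw [EuclideanSpace.norm_eq]; congr 1
    apply Finset.sum_congr rfl; intros; rw [Real.norm_eq_abs, sq_abs]; rfl
  rw [hn, hn] at key
  have h1 : 0 ≤ ∑ i, (A.mulVec x i)^2 := Finset.sum_nonneg (fun _ _ => sq_nonneg _)
  have h2 : 0 ≤ ∑ i, (x i)^2 := Finset.sum_nonneg (fun _ _ => sq_nonneg _)
  have := mul_self_le_mul_self (Real.sqrt_nonneg _) key
  rw [Real.mul_self_sqrt h1] at this
  calc ∑ i, (A.mulVec x i)^2 ≤ (opNorm A * Real.sqrt (∑ i, (x i)^2)) *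
      (opNorm A * Real.sqrt (∑ i, (x i)^2)) := this
    _ = opNorm A ^2 * (Real.sqrt (∑ i, (x i)^2) * Real.sqrt (∑ i, (x i)^2)) := by ring
    _ = opNorm A ^2 * ∑ i, (x i)^2 := by rw [Real.mul_self_sqrt h2]

lemma opNorm_transpose {d : ℕ} (A : Matrix (Fin d) (Fin d) ℝ) : opNorm Aᵀ = opNorm A := by
  have h1 : Aᵀ = star A := by
    ext i j; simp [Matrix.star_eq_conjTranspose, Matrix.conjTranspose_apply]
  rw [opNorm, opNorm, h1, map_star, ContinuousLinearMap.star_eq_adjoint]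
  exact ContinuousLinearMap.adjoint.norm_map _

lemma frob_mul_left_le {d : ℕ} (A N : Matrix (Fin d) (Fin d) ℝ) :
    frob (A * N) ≤ opNorm A * frob N := by
  apply frob_le_of_sq_le_sq (mul_nonneg (norm_nonneg _) (frob_nonneg N))
  rw [mul_pow, frob_sq, frob_sq, Finset.sum_comm]
  calc ∑ j, ∑ i, (A * N) i j ^ 2
      = ∑ j, ∑ i, (A.mulVec (fun k => N k j) i) ^ 2 := by
        refine Finset.sum_congr rfl fun j _ => Finset.sum_congr rfl fun i _ => ?_
        simp [Matrix.mul_apply, Matrix.mulVec, dotProduct]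
    _ ≤ ∑ j, opNorm A ^ 2 * ∑ i, (N i j) ^ 2 := by
        exact Finset.sum_le_sum fun j _ => mulVec_sq_sum_le A _
    _ = opNorm A ^ 2 * ∑ i, ∑ j, N i j ^ 2 := by
        rw [← Finset.mul_sum, Finset.sum_comm]

lemma frob_transpose {d : ℕ} (M : Matrix (Fin d) (Fin d) ℝ) : frob Mᵀ = frob M := by
  rw [frob, frob, Finset.sum_comm]; rfl

lemma frob_mul_right_le {d : ℕ} (N B : Matrix (Fin d) (Fin d) ℝ) :
    frob (N * B) ≤ frob N * opNorm B := by
  have h : frob (N * B) = frob (Bᵀ * Nᵀ) := by rw [← Matrix.transpose_mul, frob_transpose]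
  rw [h, mul_comm, ← opNorm_transpose B, ← frob_transpose N]
  exact frob_mul_left_le _ _

lemma frob_smul {d : ℕ} (c : ℝ) (M : Matrix (Fin d) (Fin d) ℝ) : frob (c • M) = |c| * frob M := by
  rw [frob, frob]
  have h : ∑ i, ∑ j, (c • M) i j ^ 2 = c ^ 2 * ∑ i, ∑ j, M i j ^ 2 := by
    simp_rw [Finset.mul_sum]
    refine Finset.sum_congr rfl fun i _ => Finset.sum_congr rfl fun j _ => ?_
    simp [Matrix.smul_apply]; ring
  rw [h, Real.sqrt_mul (sq_nonneg c), Real.sqrt_sq_eq_abs]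

/-! ### The explicit solution of the linear ODE for the inverse -/

noncomputable def hfun (σ t : ℝ) : ℝ :=
  if σ = 0 then t else (1 - Real.exp (-2 * σ * t)) / (2 * σ)

lemma hfun_eq (σ t : ℝ) : 2 * σ * hfun σ t = 1 - Real.exp (-2 * σ * t) := by
  rw [hfun]
  by_cases h : σ = 0
  · simp [h]
  · rw [if_neg h]; field_simp

lemma hfun_zero (σ : ℝ) : hfun σ 0 = 0 := by
  rw [hfun]; by_cases h : σ = 0 <;> simp [h]

lemma hasDerivAt_neg_lin (σ t : ℝ) : HasDerivAt (fun r : ℝ => -2 * σ * r) (-2 * σ) t := by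
  simpa using (hasDerivAt_id t).const_mul (-2 * σ)

lemma hasDerivAt_expf (σ t : ℝ) :
    HasDerivAt (fun r => Real.exp (-2 * σ * r)) (Real.exp (-2 * σ * t) * (-2 * σ)) t :=
  (hasDerivAt_neg_lin σ t).exp

lemma hasDerivAt_hfun (σ t : ℝ) : HasDerivAt (hfun σ) (Real.exp (-2 * σ * t)) t := by
  by_cases h : σ = 0
  · have he : hfun σ = fun t => t := funext fun t => by simp [hfun, h]
    rw [he, h]
    simpa using hasDerivAt_id' t
  · have he : hfun σ = fun t => (1 - Real.exp (-2 * σ * t)) / (2 * σ) :=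
      funext fun t => by simp [hfun, h]
    rw [he]
    have h1 : HasDerivAt (fun t => (1 - Real.exp (-2 * σ * t)) / (2 * σ))
        ((0 - Real.exp (-2 * σ * t) * (-2 * σ)) / (2 * σ)) t :=
      ((hasDerivAt_const t (1:ℝ)).sub (hasDerivAt_expf σ t)).div_const _
    have h2 : (0 - Real.exp (-2 * σ * t) * (-2 * σ)) / (2 * σ) = Real.exp (-2 * σ * t) := by
      field_simp
      ring
    rwa [h2] at h1

noncomputable def Dmat {d : ℕ} (B C0 : Matrix (Fin d) (Fin d) ℝ) (σ t : ℝ) :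
    Matrix (Fin d) (Fin d) ℝ :=
  Real.exp (-2 * σ * t) • C0⁻¹ + (2 * hfun σ t) • B⁻¹

lemma Dmat_zero {d : ℕ} (B C0 : Matrix (Fin d) (Fin d) ℝ) (σ : ℝ) : Dmat B C0 σ 0 = C0⁻¹ := by
  simp [Dmat, hfun_zero]

lemma hasDerivAt_Dmat {d : ℕ} (B C0 : Matrix (Fin d) (Fin d) ℝ) (σ t : ℝ) (i j : Fin d) :
    HasDerivAt (fun r => Dmat B C0 σ r i j)
      (((2:ℝ) • B⁻¹ - (2 * σ) • Dmat B C0 σ t) i j) t := by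
  have h1 : HasDerivAt (fun r => Real.exp (-2 * σ * r) * C0⁻¹ i j + 2 * hfun σ r * B⁻¹ i j)
      (Real.exp (-2 * σ * t) * (-2 * σ) * C0⁻¹ i j + 2 * Real.exp (-2 * σ * t) * B⁻¹ i j) t := by
    have ha := (hasDerivAt_expf σ t).mul_const (C0⁻¹ i j)
    have hb := ((hasDerivAt_hfun σ t).const_mul 2).mul_const (B⁻¹ i j)
    simpa [mul_assoc] using ha.fun_add hb
  have h2 : ∀ r, Real.exp (-2 * σ * r) * C0⁻¹ i j + 2 * hfun σ r * B⁻¹ i j = Dmat B C0 σ r i j := by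
    intro r; simp [Dmat, Matrix.add_apply, Matrix.smul_apply, smul_eq_mul]
  have h3 : Real.exp (-2 * σ * t) * (-2 * σ) * C0⁻¹ i j + 2 * Real.exp (-2 * σ * t) * B⁻¹ i j
      = ((2:ℝ) • B⁻¹ - (2 * σ) • Dmat B C0 σ t) i j := by
    simp only [Matrix.sub_apply, Matrix.smul_apply, smul_eq_mul, Dmat, Matrix.add_apply]
    linear_combination (2 * B⁻¹ i j) * hfun_eq σ t
  have h4 : (fun r => Real.exp (-2 * σ * r) * C0⁻¹ i j + 2 * hfun σ r * B⁻¹ i j)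
      = (fun r => Dmat B C0 σ r i j) := funext h2
  rw [h4, h3] at h1
  exact h1

/-! ### Grönwall argument -/

noncomputable def toE {d : ℕ} (M : Matrix (Fin d) (Fin d) ℝ) :
    EuclideanSpace ℝ (Fin d × Fin d) :=
  (EuclideanSpace.equiv (Fin d × Fin d) ℝ).symm (fun p => M p.1 p.2)

lemma norm_toE {d : ℕ} (M : Matrix (Fin d) (Fin d) ℝ) : ‖toE M‖ = frob M := by
  rw [EuclideanSpace.norm_eq, frob]
  congr 1
  have h : ∀ p : Fin d × Fin d, ‖toE M p‖ ^ 2 = M p.1 p.2 ^ 2 := by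
    intro p; rw [Real.norm_eq_abs, sq_abs]; rfl
  simp_rw [h]
  exact Fintype.sum_prod_type _

lemma riccati_identity {d : ℕ} (B Cm Dm : Matrix (Fin d) (Fin d) ℝ) (σ : ℝ) :
    ((-2:ℝ) • (Cm * B⁻¹ * Cm) + (2 * σ) • Cm) * Dm + Cm * ((2:ℝ) • B⁻¹ - (2 * σ) • Dm)
      = (-2:ℝ) • (Cm * B⁻¹ * (Cm * Dm - 1)) := by
  simp only [Matrix.add_mul, smul_mul_assoc, mul_sub, mul_smul_comm, mul_one, smul_sub,
    mul_assoc]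
  module

lemma CD_eq_one {d : ℕ} (B : Matrix (Fin d) (Fin d) ℝ) (σ : ℝ)
    (C : ℝ → Matrix (Fin d) (Fin d) ℝ) (hC0 : (C 0).PosDef)
    (hode : ∀ t, ∀ i j, HasDerivAt (fun r => C r i j)
      (((-2 : ℝ) • (C t * B⁻¹ * C t) + (2 * σ) • C t) i j) t) :
    ∀ t, 0 ≤ t → C t * Dmat B (C 0) σ t = 1 := by
  set D : ℝ → Matrix (Fin d) (Fin d) ℝ := fun t => Dmat B (C 0) σ t with hD
  set G : ℝ → Matrix (Fin d) (Fin d) ℝ := fun t => C t * D t - 1 with hG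
  have hGderiv : ∀ t i j, HasDerivAt (fun r => G r i j)
      (((-2:ℝ) • (C t * B⁻¹ * G t)) i j) t := by
    intro t i j
    have hsum : HasDerivAt (fun r => ∑ k, C r i k * D r k j)
        (∑ k, (((-2 : ℝ) • (C t * B⁻¹ * C t) + (2 * σ) • C t) i k * D t k j
          + C t i k * ((2:ℝ) • B⁻¹ - (2 * σ) • D t) k j)) t :=
      HasDerivAt.fun_sum fun k _ => (hode t i k).fun_mul (hasDerivAt_Dmat B (C 0) σ t k j)
    have hsum2 := hsum.sub_const ((1 : Matrix (Fin d) (Fin d) ℝ) i j)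
    have hfun_eq : (fun r => (∑ k, C r i k * D r k j) - (1 : Matrix (Fin d) (Fin d) ℝ) i j)
        = fun r => G r i j := by
      funext r
      simp [hG, Matrix.sub_apply, Matrix.mul_apply]
    have hderiv_eq : (∑ k, (((-2 : ℝ) • (C t * B⁻¹ * C t) + (2 * σ) • C t) i k * D t k j
          + C t i k * ((2:ℝ) • B⁻¹ - (2 * σ) • D t) k j))
        = ((-2:ℝ) • (C t * B⁻¹ * G t)) i j := by
      have h5 := congrFun (congrFun (riccati_identity B (C t) (D t) σ) i) j
      rw [hG]
      rw [← h5]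
      simp [Matrix.add_apply, Matrix.mul_apply, Finset.sum_add_distrib]
    rw [hfun_eq, hderiv_eq] at hsum2
    exact hsum2
  have hG0 : G 0 = 0 := by
    have h6 : C 0 * (C 0)⁻¹ = 1 :=
      Matrix.mul_nonsing_inv _ (isUnit_iff_ne_zero.2 hC0.det_pos.ne')
    simp [hG, hD, Dmat_zero, h6]
  have hg : ∀ t, HasDerivAt (fun r => toE (G r)) (toE ((-2:ℝ) • (C t * B⁻¹ * G t))) t := by
    intro t
    have hpi : HasDerivAt (fun r => (fun p : Fin d × Fin d => G r p.1 p.2))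
        (fun p : Fin d × Fin d => ((-2:ℝ) • (C t * B⁻¹ * G t)) p.1 p.2) t :=
      hasDerivAt_pi.2 fun p => hGderiv t p.1 p.2
    exact ((EuclideanSpace.equiv (Fin d × Fin d)
      ℝ).symm.toContinuousLinearMap.hasFDerivAt).comp_hasDerivAt t hpi
  have hgc : Continuous fun r => toE (G r) :=
    continuous_iff_continuousAt.2 fun t => (hg t).continuousAt
  have hCcont : ∀ i j, Continuous fun s => C s i j := by
    intro i j
    have hd : Differentiable ℝ (fun r => C r i j) := fun s => (hode s i j).differentiableAt
    exact hd.continuous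
  have hphic : Continuous fun s => frob ((-2:ℝ) • (C s * B⁻¹)) := by
    apply Real.continuous_sqrt.comp
    apply continuous_finset_sum _ fun i _ => continuous_finset_sum _ fun j _ => ?_
    have h7 : Continuous fun s => ((-2:ℝ) • (C s * B⁻¹)) i j := by
      simp only [Matrix.smul_apply, Matrix.mul_apply, smul_eq_mul]
      exact continuous_const.mul <| continuous_finset_sum _ fun k _ =>
        (hCcont i k).mul continuous_const
    exact h7.pow 2
  intro t ht
  obtain ⟨K, hK⟩ := (isCompact_Icc (a := (0:ℝ)) (b := t)).exists_bound_of_continuousOn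
    hphic.continuousOn
  have key := norm_le_gronwallBound_of_norm_deriv_right_le (f := fun r => toE (G r))
    (f' := fun s => toE ((-2:ℝ) • (C s * B⁻¹ * G s))) (δ := 0) (K := K) (ε := 0)
    (a := 0) (b := t) hgc.continuousOn
    (fun s _ => (hg s).hasDerivWithinAt)
    (by rw [norm_toE, hG0]; simp [frob])
    (fun s hs => by
      rw [norm_toE, norm_toE, add_zero]
      have h1 : ((-2:ℝ) • (C s * B⁻¹ * G s)) = ((-2:ℝ) • (C s * B⁻¹)) * G s := by
        rw [smul_mul_assoc, mul_assoc]
      rw [h1]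
      calc frob (((-2:ℝ) • (C s * B⁻¹)) * G s)
          ≤ frob ((-2:ℝ) • (C s * B⁻¹)) * frob (G s) := frob_mul_le _ _
        _ ≤ K * frob (G s) := by
            apply mul_le_mul_of_nonneg_right _ (frob_nonneg _)
            calc frob ((-2:ℝ) • (C s * B⁻¹)) ≤ ‖frob ((-2:ℝ) • (C s * B⁻¹))‖ :=
                le_abs_self _
              _ ≤ K := hK s ⟨hs.1, hs.2.le⟩)
  have hzero : ‖toE (G t)‖ ≤ 0 := by
    have h8 := key t ⟨ht, le_refl t⟩
    rwa [gronwallBound_ε0, zero_mul] at h8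
  have h9 : toE (G t) = 0 := norm_le_zero_iff.1 hzero
  have hGt : G t = 0 := by
    ext i j
    exact congrArg (fun v => v (i, j)) h9
  rw [hG] at hGt
  simpa [sub_eq_zero] using hGt

lemma inv_eq_Dmat {d : ℕ} (B : Matrix (Fin d) (Fin d) ℝ) (σ : ℝ)
    (C : ℝ → Matrix (Fin d) (Fin d) ℝ) (hC0 : (C 0).PosDef)
    (hode : ∀ t, ∀ i j, HasDerivAt (fun r => C r i j)
      (((-2 : ℝ) • (C t * B⁻¹ * C t) + (2 * σ) • C t) i j) t)
    {t : ℝ} (ht : 0 ≤ t) : (C t)⁻¹ = Dmat B (C 0) σ t :=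
  Matrix.inv_eq_right_inv (CD_eq_one B σ C hC0 hode t ht)

theorem stmt19 {d : ℕ} (B : Matrix (Fin d) (Fin d) ℝ) (hB : B.PosDef)
    (σ : ℝ) (hσ : 0 ≤ σ)
    (C1 C2 : ℝ → Matrix (Fin d) (Fin d) ℝ)
    (hC10 : (C1 0).PosDef) (hC20 : (C2 0).PosDef)
    (hC1ode : ∀ t, ∀ i j, HasDerivAt (fun r => C1 r i j)
      (((-2 : ℝ) • (C1 t * B⁻¹ * C1 t) + (2 * σ) • C1 t) i j) t)
    (hC2ode : ∀ t, ∀ i j, HasDerivAt (fun r => C2 r i j)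
      (((-2 : ℝ) • (C2 t * B⁻¹ * C2 t) + (2 * σ) • C2 t) i j) t) :
    ∀ t, 0 ≤ t →
      (C1 t)⁻¹ - (C2 t)⁻¹ = Real.exp (-2 * σ * t) • ((C1 0)⁻¹ - (C2 0)⁻¹) ∧
      frob (C1 t - C2 t) ≤
        opNorm (C1 t) * opNorm (C2 t) * frob ((C1 0)⁻¹ - (C2 0)⁻¹) *
          Real.exp (-2 * σ * t) := by
  intro t ht
  have h1 : (C1 t)⁻¹ = Dmat B (C1 0) σ t := inv_eq_Dmat B σ C1 hC10 hC1ode ht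
  have h2 : (C2 t)⁻¹ = Dmat B (C2 0) σ t := inv_eq_Dmat B σ C2 hC20 hC2ode ht
  have hpart1 : (C1 t)⁻¹ - (C2 t)⁻¹ = Real.exp (-2 * σ * t) • ((C1 0)⁻¹ - (C2 0)⁻¹) := by
    rw [h1, h2, Dmat, Dmat, smul_sub]
    abel
  refine ⟨hpart1, ?_⟩
  -- invertibility facts
  have hu1 : IsUnit (C1 t).det :=
    Matrix.isUnit_det_of_right_inverse (CD_eq_one B σ C1 hC10 hC1ode t ht)
  have hu2 : IsUnit (C2 t).det :=
    Matrix.isUnit_det_of_right_inverse (CD_eq_one B σ C2 hC20 hC2ode t ht)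
  have hfactor : C1 t - C2 t = C1 t * ((C2 t)⁻¹ - (C1 t)⁻¹) * C2 t := by
    rw [mul_sub, sub_mul, mul_assoc, Matrix.nonsing_inv_mul _ hu2, mul_one,
      Matrix.mul_nonsing_inv _ hu1, one_mul]
  have hdiff : (C2 t)⁻¹ - (C1 t)⁻¹ = (-Real.exp (-2 * σ * t)) • ((C1 0)⁻¹ - (C2 0)⁻¹) := by
    rw [neg_smul, ← hpart1]
    abel
  have hrw : C1 t - C2 t
      = (-Real.exp (-2 * σ * t)) • (C1 t * ((C1 0)⁻¹ - (C2 0)⁻¹) * C2 t) := by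
    rw [hfactor, hdiff, mul_smul_comm, smul_mul_assoc]
  set e := Real.exp (-2 * σ * t) with he
  have he0 : 0 < e := Real.exp_pos _
  set Δ := (C1 0)⁻¹ - (C2 0)⁻¹ with hΔ
  have hfe : frob (C1 t - C2 t) = e * frob (C1 t * Δ * C2 t) := by
    rw [hrw, frob_smul, abs_neg, abs_of_pos he0]
  rw [hfe]
  have hb1 : frob (C1 t * Δ * C2 t) ≤ opNorm (C1 t) * (frob Δ * opNorm (C2 t)) := by
    rw [mul_assoc]
    calc frob (C1 t * (Δ * C2 t)) ≤ opNorm (C1 t) * frob (Δ * C2 t) := frob_mul_left_le _ _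
      _ ≤ opNorm (C1 t) * (frob Δ * opNorm (C2 t)) :=
          mul_le_mul_of_nonneg_left (frob_mul_right_le _ _) (norm_nonneg _)
  calc e * frob (C1 t * Δ * C2 t) ≤ e * (opNorm (C1 t) * (frob Δ * opNorm (C2 t))) :=
      mul_le_mul_of_nonneg_left hb1 he0.le
    _ = opNorm (C1 t) * opNorm (C2 t) * frob Δ * e := by ring
end
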